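/- Let T ≤ 0, let C, K ≥ 0, and let λ, ν be real numbers with 0 ≤ λ ≤ ν. Let φ : [T, 0] → ℝ be continuous and nonnegative, and suppose that for every t ∈ [T, 0], φ(t) ≤ C e^{−νt} + K ∫_t^0 e^{−λ(t−s)} φ(s) ds. Then for every t ∈ [T, 0], φ(t) ≤ C e^{−(ν+K)t}. -/

import Mathlib

/-- Backward-in-time Gronwall inequality: if `φ ≥ 0` is continuous on `[T, 0]` (`T ≤ 0`),
`0 ≤ λ ≤ ν`, `C, K ≥ 0` and `φ(t) ≤ C e^{−νt} + K ∫_t^0 e^{−λ(t−s)} φ(s) ds` on `[T, 0]`,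
then `φ(t) ≤ C e^{−(ν+K)t}` on `[T, 0]`. -/
theorem backward_gronwall
    (T C K lam ν : ℝ) (hT : T ≤ 0) (hC : 0 ≤ C) (hK : 0 ≤ K)
    (hlam : 0 ≤ lam) (hlamν : lam ≤ ν)
    (φ : ℝ → ℝ) (hφcont : ContinuousOn φ (Set.Icc T 0))
    (hφpos : ∀ t ∈ Set.Icc T (0 : ℝ), 0 ≤ φ t)
    (hineq : ∀ t ∈ Set.Icc T (0 : ℝ),
      φ t ≤ C * Real.exp (-(ν * t)) +
        K * ∫ s in t..0, Real.exp (-(lam * (t - s))) * φ s) :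
    ∀ t ∈ Set.Icc T (0 : ℝ), φ t ≤ C * Real.exp (-((ν + K) * t)) := by
  set f : ℝ → ℝ := fun s => Real.exp (ν * s) * φ s with hf_def
  have hfcont : ContinuousOn f (Set.Icc T 0) :=
    (Real.continuous_exp.comp (continuous_const.mul continuous_id)).continuousOn.mul hφcont
  set G : ℝ → ℝ := fun t => ∫ s in t..0, f s with hG_def
  -- integrability of f on subintervals
  have hfint : ∀ t ∈ Set.Icc T (0 : ℝ), IntervalIntegrable f MeasureTheory.volume t 0 := by
    intro t ht
    apply ContinuousOn.intervalIntegrable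
    apply hfcont.mono
    rw [Set.uIcc_of_le ht.2]
    exact Set.Icc_subset_Icc ht.1 le_rfl
  -- derivative of G within Icc
  have hG : ∀ t ∈ Set.Icc T (0 : ℝ), HasDerivWithinAt G (-(f t)) (Set.Icc T 0) t := by
    intro t ht
    haveI : Fact (t ∈ Set.Icc T (0:ℝ)) := ⟨ht⟩
    exact intervalIntegral.integral_hasDerivWithinAt_left (hfint t ht)
      ⟨Set.Icc T 0, self_mem_nhdsWithin, hfcont.aestronglyMeasurable measurableSet_Icc⟩
      (hfcont t ht)
  have hGcont : ContinuousOn G (Set.Icc T 0) := fun t ht => (hG t ht).continuousWithinAt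
  -- Step 1: f t ≤ C + K * G t on Icc T 0
  have hkey : ∀ t ∈ Set.Icc T (0 : ℝ), f t ≤ C + K * G t := by
    intro t ht
    have hmono : (∫ s in t..0, Real.exp (-(lam * (t - s))) * φ s)
        ≤ ∫ s in t..0, Real.exp (-(ν * t)) * f s := by
      apply intervalIntegral.integral_mono_on ht.2
      · apply ContinuousOn.intervalIntegrable
        apply ContinuousOn.mul
        · exact (Real.continuous_exp.comp (by continuity)).continuousOn
        · apply hφcont.mono
          rw [Set.uIcc_of_le ht.2]
          exact Set.Icc_subset_Icc ht.1 le_rfl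
      · apply ContinuousOn.intervalIntegrable
        apply ContinuousOn.mul continuousOn_const
        apply hfcont.mono
        rw [Set.uIcc_of_le ht.2]
        exact Set.Icc_subset_Icc ht.1 le_rfl
      · intro s hs
        have hs' : s ∈ Set.Icc T (0:ℝ) := ⟨ht.1.trans hs.1, hs.2⟩
        have h1 : Real.exp (-(lam * (t - s))) ≤ Real.exp (-(ν * (t - s))) := by
          apply Real.exp_le_exp.2
          have : t - s ≤ 0 := by linarith [hs.1]
          nlinarith
        have h2 : Real.exp (-(ν * t)) * f s = Real.exp (-(ν * (t - s))) * φ s := by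
          simp only [hf_def]
          rw [← mul_assoc, ← Real.exp_add]
          ring_nf
        rw [h2]
        exact mul_le_mul_of_nonneg_right h1 (hφpos s hs')
    have h3 : (∫ s in t..0, Real.exp (-(ν * t)) * f s) = Real.exp (-(ν * t)) * G t := by
      rw [hG_def]
      exact intervalIntegral.integral_const_mul _ _
    have h4 := hineq t ht
    have h5 : φ t ≤ Real.exp (-(ν * t)) * (C + K * G t) := by
      calc φ t ≤ C * Real.exp (-(ν * t)) + K * ∫ s in t..0, Real.exp (-(lam * (t - s))) * φ s := h4
        _ ≤ C * Real.exp (-(ν * t)) + K * (Real.exp (-(ν * t)) * G t) := by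
            rw [← h3]; exact add_le_add_right (mul_le_mul_of_nonneg_left hmono hK) _
        _ = Real.exp (-(ν * t)) * (C + K * G t) := by ring
    have h6 : f t = Real.exp (ν * t) * φ t := rfl
    calc f t = Real.exp (ν * t) * φ t := h6
      _ ≤ Real.exp (ν * t) * (Real.exp (-(ν * t)) * (C + K * G t)) :=
          mul_le_mul_of_nonneg_left h5 (Real.exp_pos _).le
      _ = C + K * G t := by rw [← mul_assoc, ← Real.exp_add]; simp
  -- Step 2: F is monotone on Icc T 0
  set F : ℝ → ℝ := fun t => Real.exp (K * t) * (C + K * G t) with hF_def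
  have hFderiv : ∀ t ∈ Set.Ioo T (0 : ℝ),
      HasDerivAt F (K * Real.exp (K * t) * (C + K * G t) + Real.exp (K * t) * (K * -(f t))) t := by
    intro t ht
    have htmem : t ∈ Set.Icc T (0:ℝ) := Set.Ioo_subset_Icc_self ht
    have hGt : HasDerivAt G (-(f t)) t :=
      (hG t htmem).hasDerivAt (Icc_mem_nhds ht.1 ht.2)
    have he : HasDerivAt (fun t => Real.exp (K * t)) (K * Real.exp (K * t)) t := by
      simpa [mul_comm, Function.comp_def] using (Real.hasDerivAt_exp (K * t)).comp t
        ((hasDerivAt_id t).const_mul K)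
    exact he.mul ((hGt.const_mul K).const_add C)
  have hFcont : ContinuousOn F (Set.Icc T 0) := by
    apply ContinuousOn.mul
    · exact (Real.continuous_exp.comp (continuous_const.mul continuous_id)).continuousOn
    · exact continuousOn_const.add (continuousOn_const.mul hGcont)
  have hintIoo : interior (Set.Icc T (0:ℝ)) = Set.Ioo T 0 := interior_Icc
  have hFmono : MonotoneOn F (Set.Icc T 0) := by
    apply monotoneOn_of_deriv_nonneg (convex_Icc T 0) hFcont
    · rw [hintIoo]
      intro t ht
      exact (hFderiv t ht).differentiableAt.differentiableWithinAt
    · rw [hintIoo]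
      intro t ht
      rw [(hFderiv t ht).deriv]
      have h1 : f t ≤ C + K * G t := hkey t (Set.Ioo_subset_Icc_self ht)
      have h2 : (0:ℝ) < Real.exp (K * t) := Real.exp_pos _
      nlinarith [mul_nonneg (mul_nonneg hK h2.le) (sub_nonneg.2 h1)]
  -- Conclude
  intro t ht
  have hF0 : F 0 = C := by
    simp [hF_def, hG_def, intervalIntegral.integral_same]
  have hFt : F t ≤ C := by
    rw [← hF0]
    exact hFmono ht (Set.right_mem_Icc.2 hT) ht.2
  have h7 : C + K * G t ≤ C * Real.exp (-(K * t)) := by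
    have := mul_le_mul_of_nonneg_left hFt (Real.exp_pos (-(K * t))).le
    calc C + K * G t = Real.exp (-(K * t)) * F t := by
          rw [hF_def, ← mul_assoc, ← Real.exp_add]; simp
      _ ≤ Real.exp (-(K * t)) * C := this
      _ = C * Real.exp (-(K * t)) := mul_comm _ _
  have h8 : f t ≤ C * Real.exp (-(K * t)) := (hkey t ht).trans h7
  have h9 : φ t = Real.exp (-(ν * t)) * f t := by
    simp only [hf_def]
    rw [← mul_assoc, ← Real.exp_add]
    simp
  rw [h9]
  calc Real.exp (-(ν * t)) * f t ≤ Real.exp (-(ν * t)) * (C * Real.exp (-(K * t))) :=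
        mul_le_mul_of_nonneg_left h8 (Real.exp_pos _).le
    _ = C * Real.exp (-((ν + K) * t)) := by
        rw [← mul_assoc, mul_comm (Real.exp _) C, mul_assoc, ← Real.exp_add]
        ring_nf
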